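/- Suppose μ > ln(2·cosh(β)). Then the matrix geometric series M = Σ_{n=1}^∞ Tⁿ, where T = e^{-μ}[[e^β, e^{-β}],[e^{-β}, e^β]], converges and equals (e^{β-μ}/(e^{2β}(1-e^{β-μ})² - e^{-2μ})) · [[m, 1],[1, m]], where m = e^{2β} + (1-e^{4β})e^{-(β+μ)}. -/

import Mathlib

open Matrix in
private lemma pow_decomp_aux {a b : ℝ} {P Q : Matrix (Fin 2) (Fin 2) ℝ} (hPP : P*P=P)
    (hQQ : Q*Q=Q) (hPQ : P*Q=0) (hQP : Q*P=0) :
    ∀ n : ℕ, (a•P+b•Q)^(n+1) = a^(n+1)•P + b^(n+1)•Q := by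
  intro n
  induction n with
  | zero => simp
  | succ k ih =>
    rw [pow_succ, ih]
    simp only [Matrix.add_mul, Matrix.mul_add, Matrix.smul_mul, Matrix.mul_smul,
      hPP, hQQ, hPQ, hQP, smul_smul, smul_zero]
    module

open Matrix in
private lemma comb_aux (x y c m : ℝ) (h1 : x + y = 2 * (c * m)) (h2 : x - y = 2 * c) :
    x • (!![1/2, 1/2; 1/2, 1/2] : Matrix (Fin 2) (Fin 2) ℝ) + y • !![1/2, -(1/2); -(1/2), 1/2]
      = c • !![m, 1; 1, m] := by
  ext i j
  fin_cases i <;> fin_cases j <;> simp <;> linarith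

open Matrix in
theorem geometric_series_T (β μ : ℝ) (h : Real.log (2 * Real.cosh β) < μ) :
    let T : Matrix (Fin 2) (Fin 2) ℝ :=
      Real.exp (-μ) • !![Real.exp β, Real.exp (-β); Real.exp (-β), Real.exp β]
    let m : ℝ := Real.exp (2 * β) + (1 - Real.exp (4 * β)) * Real.exp (-(β + μ))
    let c : ℝ := Real.exp (β - μ) /
      (Real.exp (2 * β) * (1 - Real.exp (β - μ)) ^ 2 - Real.exp (-(2 * μ)))
    HasSum (fun n : ℕ => T ^ (n + 1)) (c • !![m, 1; 1, m]) := by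
  intro T m c
  set X := Real.exp β with hX
  set Y := Real.exp (-μ) with hY
  have hX0 : (0:ℝ) < X := Real.exp_pos _
  have hY0 : (0:ℝ) < Y := Real.exp_pos _
  have hXinv : Real.exp (-β) = X⁻¹ := by rw [hX, ← Real.exp_neg]
  -- eigenvalues
  set a : ℝ := Y * (X + X⁻¹) with ha
  set b : ℝ := Y * (X - X⁻¹) with hb
  have hcosh : 2 * Real.cosh β = X + X⁻¹ := by
    rw [Real.cosh_eq, hXinv]; ring
  have hcosh0 : (0:ℝ) < 2 * Real.cosh β := by positivity
  have ha1 : a < 1 := by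
    have := Real.exp_lt_exp.mpr h
    rw [Real.exp_log hcosh0] at this
    have hYlt : Y < (X + X⁻¹)⁻¹ := by
      rw [hY, Real.exp_neg, ← hcosh]
      exact inv_strictAnti₀ hcosh0 this
    calc a < (X + X⁻¹)⁻¹ * (X + X⁻¹) := by
            apply mul_lt_mul_of_pos_right hYlt; positivity
      _ = 1 := by field_simp
  have ha0 : 0 < a := by positivity
  have hb_lt : b < a := by
    have : X - X⁻¹ < X + X⁻¹ := by nlinarith [inv_pos.mpr hX0]
    exact mul_lt_mul_of_pos_left this hY0
  have hb_gt : -a < b := by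
    have : -(X + X⁻¹) < X - X⁻¹ := by nlinarith [inv_pos.mpr hX0]
    nlinarith
  have hb_abs : |b| < 1 := by
    rw [abs_lt]; constructor <;> nlinarith
  have ha_abs : |a| < 1 := by rw [abs_of_pos ha0]; exact ha1
  have h1a : (1:ℝ) - a ≠ 0 := by nlinarith
  have h1b : (1:ℝ) - b ≠ 0 := by
    have := abs_lt.mp hb_abs; nlinarith [this.2]
  -- projectors
  set P : Matrix (Fin 2) (Fin 2) ℝ := !![1/2, 1/2; 1/2, 1/2] with hP
  set Q : Matrix (Fin 2) (Fin 2) ℝ := !![1/2, -(1/2); -(1/2), 1/2] with hQ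
  have hPP : P * P = P := by
    ext i j; fin_cases i <;> fin_cases j <;>
      simp [hP, Matrix.mul_apply, Fin.sum_univ_two] <;> norm_num
  have hQQ : Q * Q = Q := by
    ext i j; fin_cases i <;> fin_cases j <;>
      simp [hQ, Matrix.mul_apply, Fin.sum_univ_two] <;> norm_num
  have hPQ : P * Q = 0 := by
    ext i j; fin_cases i <;> fin_cases j <;>
      simp [hP, hQ, Matrix.mul_apply, Fin.sum_univ_two] <;> norm_num
  have hQP : Q * P = 0 := by
    ext i j; fin_cases i <;> fin_cases j <;>
      simp [hP, hQ, Matrix.mul_apply, Fin.sum_univ_two] <;> norm_num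
  have hT : T = a • P + b • Q := by
    ext i j; fin_cases i <;> fin_cases j <;>
      simp [T, hP, hQ, ha, hb, hXinv] <;> ring
  -- powers
  have hpow : ∀ n : ℕ, T ^ (n + 1) = a ^ (n + 1) • P + b ^ (n + 1) • Q := by
    intro n
    rw [hT]
    exact pow_decomp_aux hPP hQQ hPQ hQP n
  -- geometric sums
  have hsa : HasSum (fun n : ℕ => a ^ (n + 1)) (a * (1 - a)⁻¹) := by
    have h0 := (hasSum_geometric_of_norm_lt_one (ξ := a)
      (by rw [Real.norm_eq_abs]; exact ha_abs)).mul_left a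
    simpa only [pow_succ'] using h0
  have hsb : HasSum (fun n : ℕ => b ^ (n + 1)) (b * (1 - b)⁻¹) := by
    have h0 := (hasSum_geometric_of_norm_lt_one (ξ := b)
      (by rw [Real.norm_eq_abs]; exact hb_abs)).mul_left b
    simpa only [pow_succ'] using h0
  have hsum : HasSum (fun n : ℕ => T ^ (n + 1))
      ((a * (1 - a)⁻¹) • P + (b * (1 - b)⁻¹) • Q) := by
    have := (hsa.smul_const P).add (hsb.smul_const Q)
    simpa [hpow] using this
  -- identify the limit
  have hXX : X * X⁻¹ = 1 := mul_inv_cancel₀ hX0.ne'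
  have e1 : Real.exp (β - μ) = X * Y := by
    rw [Real.exp_sub, hY, Real.exp_neg, hX, div_eq_mul_inv]
  have e2 : Real.exp (2 * β) = X ^ 2 := by rw [two_mul, Real.exp_add, ← hX, sq]
  have e4 : Real.exp (4 * β) = X ^ 4 := by
    rw [show (4:ℝ) * β = β + β + β + β by ring, Real.exp_add, Real.exp_add, Real.exp_add,
      ← hX]
    ring
  have e5 : Real.exp (-(2 * μ)) = Y ^ 2 := by
    rw [show -(2 * μ) = -μ + -μ by ring, Real.exp_add, ← hY, sq]
  have e6 : Real.exp (-(β + μ)) = X⁻¹ * Y := by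
    rw [show -(β + μ) = -β + -μ by ring, Real.exp_add, hXinv, ← hY]
  have hAeq : X - Y * (X ^ 2 + 1) = X * (1 - a) := by
    rw [ha]; linear_combination Y * hXX
  have hBeq : X - Y * (X ^ 2 - 1) = X * (1 - b) := by
    rw [hb]; linear_combination (-Y) * hXX
  have hA0 : X - Y * (X ^ 2 + 1) ≠ 0 := by rw [hAeq]; exact mul_ne_zero hX0.ne' h1a
  have hB0 : X - Y * (X ^ 2 - 1) ≠ 0 := by rw [hBeq]; exact mul_ne_zero hX0.ne' h1b
  have hXa : X * a = Y * (X ^ 2 + 1) := by rw [ha]; linear_combination Y * hXX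
  have hXb : X * b = Y * (X ^ 2 - 1) := by rw [hb]; linear_combination (-Y) * hXX
  have h1ainv : (1 - a)⁻¹ * (1 - a) = 1 := inv_mul_cancel₀ h1a
  have h1binv : (1 - b)⁻¹ * (1 - b) = 1 := inv_mul_cancel₀ h1b
  have haA : a * (1 - a)⁻¹ = Y * (X ^ 2 + 1) / (X - Y * (X ^ 2 + 1)) := by
    rw [eq_div_iff hA0, hAeq]
    linear_combination (X * a) * h1ainv + hXa
  have hbB : b * (1 - b)⁻¹ = Y * (X ^ 2 - 1) / (X - Y * (X ^ 2 - 1)) := by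
    rw [eq_div_iff hB0, hBeq]
    linear_combination (X * b) * h1binv + hXb
  have hm2 : m = (X ^ 3 + (1 - X ^ 4) * Y) / X := by
    simp only [m]
    rw [e2, e4, e6]
    rw [eq_div_iff hX0.ne']
    linear_combination ((1 - X ^ 4) * Y) * hXX
  have hDeq : X ^ 2 * (1 - X * Y) ^ 2 - Y ^ 2
      = (X - Y * (X ^ 2 + 1)) * (X - Y * (X ^ 2 - 1)) := by ring
  have hD0 : X ^ 2 * (1 - X * Y) ^ 2 - Y ^ 2 ≠ 0 := by
    rw [hDeq]; exact mul_ne_zero hA0 hB0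
  have hc2 : c = X * Y / ((X - Y * (X ^ 2 + 1)) * (X - Y * (X ^ 2 - 1))) := by
    simp only [c]
    rw [e1, e2, e5]
    rw [div_eq_div_iff hD0 (mul_ne_zero hA0 hB0), hDeq]
  have key1 : a * (1 - a)⁻¹ * (1 / 2) + b * (1 - b)⁻¹ * (1 / 2) = c * m := by
    rw [haA, hbB, hc2, hm2]
    field_simp
    ring
  have key2 : a * (1 - a)⁻¹ * (1 / 2) - b * (1 - b)⁻¹ * (1 / 2) = c := by
    rw [haA, hbB, hc2]
    field_simp
    ring
  have hfinal : (a * (1 - a)⁻¹) • P + (b * (1 - b)⁻¹) • Q = c • !![m, 1; 1, m] := by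
    rw [hP, hQ]
    exact comb_aux _ _ c m (by linarith [key1]) (by linarith [key2])
  rw [← hfinal]
  exact hsum
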